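/- Let (Ω, F, P) be a probability space, λ ∈ (0,1), C ≥ 0, and let Z_0, Z_{-1} be nonnegative random variables with E[Z_{-1} | Z_0] ≤ C almost surely and E[e^{(1-λ)Z_0}] = ∞. Then E[e^{(1-λ)Z_0 - (1+λ)Z_{-1}}] = ∞. -/

import Mathlib

open MeasureTheory

/-- If `Z₀, Z₋₁ ≥ 0`, `E[Z₋₁ | Z₀] ≤ C` a.s. and `E[e^{(1-λ)Z₀}] = ∞`, then
`E[e^{(1-λ)Z₀ - (1+λ)Z₋₁}] = ∞`. -/
theorem stmt10 {Ω : Type*} [m0 : MeasurableSpace Ω] (μ : Measure Ω) [IsProbabilityMeasure μ]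
    (lam C : ℝ) (hlam0 : 0 < lam) (hlam1 : lam < 1) (hC : 0 ≤ C)
    (Z₀ Zm₁ : Ω → ℝ) (hZ₀ : Measurable Z₀) (hZm₁ : Measurable Zm₁)
    (hZ₀pos : ∀ ω, 0 ≤ Z₀ ω) (hZm₁pos : ∀ ω, 0 ≤ Zm₁ ω)
    (hint : Integrable Zm₁ μ)
    (hcond : ∀ᵐ ω ∂μ, (μ[Zm₁ | MeasurableSpace.comap Z₀ Real.measurableSpace]) ω ≤ C)
    (hdiv : ∫⁻ ω, ENNReal.ofReal (Real.exp ((1 - lam) * Z₀ ω)) ∂μ = ⊤) :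
    ∫⁻ ω, ENNReal.ofReal (Real.exp ((1 - lam) * Z₀ ω - (1 + lam) * Zm₁ ω)) ∂μ = ⊤ := by
  classical
  set a := 1 - lam with ha_def
  have ha : 0 < a := by simp [ha_def]; linarith
  set b := 1 + lam with hb_def
  have hb : 0 < b := by simp [hb_def]; linarith
  set K := 2 * (C + 1) with hK_def
  have hK : 0 < K := by simp [hK_def]; linarith
  have hm : MeasurableSpace.comap Z₀ Real.measurableSpace ≤ m0 := hZ₀.comap_le
  set A : ℕ → Set Ω := fun n => Z₀ ⁻¹' Set.Ico (n : ℝ) (n + 1) with hA_def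
  have hAmeas : ∀ n, MeasurableSet (A n) := fun n => hZ₀ measurableSet_Ico
  have hAdisj : Pairwise (Function.onFun Disjoint A) := by
    intro i j hij
    refine Set.disjoint_left.2 fun ω hi hj => ?_
    simp only [hA_def, Set.mem_preimage, Set.mem_Ico] at hi hj
    rcases lt_or_gt_of_ne hij with h | h
    · have : (i : ℝ) + 1 ≤ (j : ℝ) := by exact_mod_cast h
      linarith [hi.2, hj.1]
    · have : (j : ℝ) + 1 ≤ (i : ℝ) := by exact_mod_cast h
      linarith [hj.2, hi.1]
  have hAunion : (⋃ n, A n) = Set.univ := by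
    ext ω
    simp only [hA_def, Set.mem_iUnion, Set.mem_preimage, Set.mem_Ico, Set.mem_univ, iff_true]
    exact ⟨⌊Z₀ ω⌋₊, Nat.floor_le (hZ₀pos ω), Nat.lt_floor_add_one _⟩
  have hμA : ∀ n, μ (A n) ≠ ⊤ := fun n => measure_ne_top μ _
  -- set integral bound
  have hsetint : ∀ n, ∫ ω in A n, Zm₁ ω ∂μ ≤ C * (μ (A n)).toReal := by
    intro n
    have hsm : MeasurableSet[MeasurableSpace.comap Z₀ Real.measurableSpace] (A n) := ⟨Set.Ico (n : ℝ) (n + 1), measurableSet_Ico, rfl⟩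
    rw [← setIntegral_condExp hm hint hsm]
    calc ∫ ω in A n, (μ[Zm₁|MeasurableSpace.comap Z₀ Real.measurableSpace]) ω ∂μ ≤ ∫ _ω in A n, C ∂μ := by
          refine setIntegral_mono_ae integrable_condExp.integrableOn
            (integrable_const C).integrableOn hcond
      _ = C * (μ (A n)).toReal := by rw [setIntegral_const, smul_eq_mul, mul_comm, Measure.real]
  set B := {ω | Zm₁ ω < K} with hB_def
  have hBmeas : MeasurableSet B := measurableSet_lt hZm₁ measurable_const
  have hABmeas : ∀ n, MeasurableSet (A n ∩ B) := fun n => (hAmeas n).inter hBmeas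
  -- Markov: half the mass of A n is in B
  have hkey : ∀ n, 2⁻¹ * μ (A n) ≤ μ (A n ∩ B) := by
    intro n
    have h1 : ENNReal.ofReal K * μ (A n ∩ Bᶜ) ≤ ENNReal.ofReal C * μ (A n) := by
      have hm1 : ∫⁻ ω in A n, ENNReal.ofReal (Zm₁ ω) ∂μ = ENNReal.ofReal (∫ ω in A n, Zm₁ ω ∂μ) :=
        (ofReal_integral_eq_lintegral_ofReal hint.integrableOn
          (Filter.Eventually.of_forall hZm₁pos)).symm
      have hm2 := mul_meas_ge_le_lintegral₀
        (μ := μ.restrict (A n))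
        (hZm₁.ennreal_ofReal.aemeasurable) (ENNReal.ofReal K)
      have hset : {x | ENNReal.ofReal K ≤ ENNReal.ofReal (Zm₁ x)} = Bᶜ := by
        ext x
        simp only [Set.mem_setOf_eq, hB_def, Set.mem_compl_iff, not_lt,
          ENNReal.ofReal_le_ofReal_iff (hZm₁pos x)]
      rw [hset, Measure.restrict_apply hBmeas.compl, Set.inter_comm] at hm2
      calc ENNReal.ofReal K * μ (A n ∩ Bᶜ) ≤ ∫⁻ ω in A n, ENNReal.ofReal (Zm₁ ω) ∂μ := hm2
        _ = ENNReal.ofReal (∫ ω in A n, Zm₁ ω ∂μ) := hm1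
        _ ≤ ENNReal.ofReal (C * (μ (A n)).toReal) := ENNReal.ofReal_le_ofReal (hsetint n)
        _ = ENNReal.ofReal C * μ (A n) := by
            rw [ENNReal.ofReal_mul hC, ENNReal.ofReal_toReal (hμA n)]
    have hc0 : ENNReal.ofReal (C + 1) ≠ 0 := by
      simp [ENNReal.ofReal_eq_zero]; linarith
    have hctop : ENNReal.ofReal (C + 1) ≠ ⊤ := ENNReal.ofReal_ne_top
    have hKeq : ENNReal.ofReal K = 2 * ENNReal.ofReal (C + 1) := by
      rw [hK_def, ENNReal.ofReal_mul (by norm_num : (0:ℝ) ≤ 2)]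
      norm_num
    have h2 : 2 * μ (A n ∩ Bᶜ) ≤ μ (A n) := by
      have h1' : ENNReal.ofReal (C + 1) * (2 * μ (A n ∩ Bᶜ))
          ≤ ENNReal.ofReal (C + 1) * μ (A n) := by
        calc ENNReal.ofReal (C + 1) * (2 * μ (A n ∩ Bᶜ))
            = ENNReal.ofReal K * μ (A n ∩ Bᶜ) := by rw [hKeq]; ring
          _ ≤ ENNReal.ofReal C * μ (A n) := h1
          _ ≤ ENNReal.ofReal (C + 1) * μ (A n) :=
              mul_le_mul_left (ENNReal.ofReal_le_ofReal (by linarith)) _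
      exact (ENNReal.mul_le_mul_iff_right hc0 hctop).1 h1'
    have hsplit : μ (A n) = μ (A n ∩ B) + μ (A n ∩ Bᶜ) := by
      rw [← measure_inter_add_diff (A n) hBmeas, Set.diff_eq]
    have hxy : μ (A n ∩ Bᶜ) ≤ μ (A n ∩ B) := by
      have hx : μ (A n ∩ Bᶜ) ≠ ⊤ := measure_ne_top μ _
      have h3 := h2
      rw [two_mul, hsplit, add_comm (μ (A n ∩ B))] at h3
      exact (ENNReal.add_le_add_iff_left hx).1 h3
    calc 2⁻¹ * μ (A n) ≤ 2⁻¹ * (2 * μ (A n ∩ B)) := by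
          rw [hsplit, two_mul]; gcongr
      _ = μ (A n ∩ B) := by rw [← mul_assoc, ENNReal.inv_mul_cancel (by norm_num) (by norm_num), one_mul]
  -- divergence of S
  set S := ∑' n : ℕ, ENNReal.ofReal (Real.exp (a * n)) * μ (A n) with hS_def
  have hSdiv : S = ⊤ := by
    by_contra hS
    have hsum : ∫⁻ ω, ENNReal.ofReal (Real.exp (a * Z₀ ω)) ∂μ
        ≤ ∑' n : ℕ, ENNReal.ofReal (Real.exp (a * (n + 1))) * μ (A n) := by
      rw [← setLIntegral_univ, ← hAunion, lintegral_iUnion hAmeas hAdisj]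
      refine ENNReal.tsum_le_tsum fun n => ?_
      calc ∫⁻ ω in A n, ENNReal.ofReal (Real.exp (a * Z₀ ω)) ∂μ
          ≤ ∫⁻ _ω in A n, ENNReal.ofReal (Real.exp (a * (n + 1))) ∂μ := by
            refine setLIntegral_mono (by measurability) fun ω hω => ?_
            simp only [hA_def, Set.mem_preimage, Set.mem_Ico] at hω
            exact ENNReal.ofReal_le_ofReal (Real.exp_le_exp.2
              (mul_le_mul_of_nonneg_left hω.2.le ha.le))
        _ = ENNReal.ofReal (Real.exp (a * (n + 1))) * μ (A n) := by
            rw [setLIntegral_const]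
    have heq : (∑' n : ℕ, ENNReal.ofReal (Real.exp (a * (n + 1))) * μ (A n))
        = ENNReal.ofReal (Real.exp a) * S := by
      rw [hS_def, ← ENNReal.tsum_mul_left]
      congr 1; ext n
      rw [← mul_assoc, ← ENNReal.ofReal_mul (Real.exp_nonneg _), ← Real.exp_add]
      ring_nf
    rw [heq] at hsum
    have : (⊤ : ENNReal) ≤ ENNReal.ofReal (Real.exp a) * S := hdiv ▸ hsum
    exact absurd (top_le_iff.1 this) (ENNReal.mul_ne_top ENNReal.ofReal_ne_top hS)
  -- final lower bound
  set c := ENNReal.ofReal (Real.exp (-(b * K))) * 2⁻¹ with hc_def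
  have hc0 : c ≠ 0 := by
    simp [hc_def, mul_eq_zero, ENNReal.ofReal_eq_zero, not_le, Real.exp_pos]
  have hfinal : c * S ≤ ∫⁻ ω, ENNReal.ofReal (Real.exp (a * Z₀ ω - b * Zm₁ ω)) ∂μ := by
    rw [hS_def, ← ENNReal.tsum_mul_left]
    have hABdisj : Pairwise (Function.onFun Disjoint (fun n => A n ∩ B)) := fun i j hij =>
      (hAdisj hij).mono Set.inter_subset_left Set.inter_subset_left
    calc (∑' n : ℕ, c * (ENNReal.ofReal (Real.exp (a * n)) * μ (A n)))
        ≤ ∑' n : ℕ, ∫⁻ ω in A n ∩ B, ENNReal.ofReal (Real.exp (a * Z₀ ω - b * Zm₁ ω)) ∂μ := by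
          refine ENNReal.tsum_le_tsum fun n => ?_
          calc c * (ENNReal.ofReal (Real.exp (a * n)) * μ (A n))
              = ENNReal.ofReal (Real.exp (a * n)) * ENNReal.ofReal (Real.exp (-(b * K)))
                * (2⁻¹ * μ (A n)) := by rw [hc_def]; ring
            _ ≤ ENNReal.ofReal (Real.exp (a * n)) * ENNReal.ofReal (Real.exp (-(b * K)))
                * μ (A n ∩ B) := by gcongr; exact hkey n
            _ = ENNReal.ofReal (Real.exp (a * n - b * K)) * μ (A n ∩ B) := by
                rw [← ENNReal.ofReal_mul (Real.exp_nonneg _), ← Real.exp_add]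
                ring_nf
            _ ≤ ∫⁻ ω in A n ∩ B, ENNReal.ofReal (Real.exp (a * Z₀ ω - b * Zm₁ ω)) ∂μ := by
                rw [← setLIntegral_const (A n ∩ B)]
                refine setLIntegral_mono
                  ((Real.measurable_exp.comp
                    ((hZ₀.const_mul a).sub (hZm₁.const_mul b))).ennreal_ofReal)
                  fun ω hω => ?_
                obtain ⟨hωA, hωB⟩ := hω
                simp only [hA_def, Set.mem_preimage, Set.mem_Ico] at hωA
                simp only [hB_def, Set.mem_setOf_eq] at hωB
                refine ENNReal.ofReal_le_ofReal (Real.exp_le_exp.2 ?_)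
                have h1 : a * n ≤ a * Z₀ ω := mul_le_mul_of_nonneg_left hωA.1 ha.le
                have h2 : b * Zm₁ ω ≤ b * K := mul_le_mul_of_nonneg_left hωB.le hb.le
                linarith
      _ = ∫⁻ ω in ⋃ n, A n ∩ B, ENNReal.ofReal (Real.exp (a * Z₀ ω - b * Zm₁ ω)) ∂μ :=
          (lintegral_iUnion hABmeas hABdisj _).symm
      _ ≤ ∫⁻ ω, ENNReal.ofReal (Real.exp (a * Z₀ ω - b * Zm₁ ω)) ∂μ :=
          lintegral_mono' Measure.restrict_le_self le_rfl
  refine top_le_iff.1 ?_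
  calc (⊤ : ENNReal) = c * S := by rw [hSdiv, ENNReal.mul_top hc0]
    _ ≤ _ := hfinal
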